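/- Let φ, Φ ∈ ℂ with Re(Φ·conj(φ)) > 0 and let T be a bounded linear operator on a complex Hilbert space such that Re⟨Φx − Tx, Tx − φx⟩ ≥ 0 for all unit vectors x. Then 2·sqrt(Re(Φ·conj(φ)))·‖T‖ ≤ |Φ + φ|·w(T). -/

import Mathlib

noncomputable def numRadius {H : Type*} [NormedAddCommGroup H] [InnerProductSpace ℂ H]
    (T : H →L[ℂ] H) : ℝ :=
  sSup {r : ℝ | ∃ x : H, ‖x‖ = 1 ∧ r = ‖(inner ℂ (T x) x : ℂ)‖}

lemma inner_expand_aux {H : Type*} [NormedAddCommGroup H] [InnerProductSpace ℂ H]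
    (T : H →L[ℂ] H) (phi Phi : ℂ) (x : H) (hx : ‖x‖ = 1) :
    (inner ℂ (Phi • x - T x) (T x - phi • x) : ℂ).re
      = ((Phi + phi) * (inner ℂ (T x) x : ℂ)).re - (Phi * starRingEnd ℂ phi).re - ‖T x‖^2 := by
  have h1 : (inner ℂ x (T x) : ℂ) = starRingEnd ℂ (inner ℂ (T x) x) := (inner_conj_symm _ _).symm
  have h2 : (inner ℂ x x : ℂ) = 1 := by
    rw [inner_self_eq_norm_sq_to_K, hx]; norm_num
  have h3 : (inner ℂ (T x) (T x) : ℂ) = (‖T x‖:ℂ)^2 := inner_self_eq_norm_sq_to_K _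
  rw [inner_sub_left, inner_sub_right, inner_sub_right, inner_smul_left, inner_smul_right,
    inner_smul_left, inner_smul_right, h1, h2, h3]
  simp [Complex.ext_iff, Complex.mul_re, -inner_conj_symm, ← Complex.ofReal_pow]
  ring

lemma numRadius_bdd {H : Type*} [NormedAddCommGroup H] [InnerProductSpace ℂ H]
    (T : H →L[ℂ] H) :
    BddAbove {r : ℝ | ∃ x : H, ‖x‖ = 1 ∧ r = ‖(inner ℂ (T x) x : ℂ)‖} := by
  refine ⟨‖T‖, ?_⟩
  rintro r ⟨x, hx, rfl⟩
  calc ‖(inner ℂ (T x) x : ℂ)‖ = ‖(inner ℂ (T x) x : ℂ)‖ := rfl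
    _ ≤ ‖T x‖ * ‖x‖ := norm_inner_le_norm _ _
    _ ≤ ‖T‖ * ‖x‖ * ‖x‖ := by
        gcongr; exact T.le_opNorm x
    _ = ‖T‖ := by rw [hx]; ring

theorem stmt_10 {H : Type*} [NormedAddCommGroup H] [InnerProductSpace ℂ H] [CompleteSpace H]
    (T : H →L[ℂ] H) (phi Phi : ℂ) (hre : 0 < (Phi * starRingEnd ℂ phi).re)
    (h : ∀ x : H, ‖x‖ = 1 → 0 ≤ (inner ℂ (Phi • x - T x) (T x - phi • x) : ℂ).re) :
    2 * Real.sqrt (Phi * starRingEnd ℂ phi).re * ‖T‖ ≤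
      ‖Phi + phi‖ * numRadius T := by
  set p : ℝ := (Phi * starRingEnd ℂ phi).re with hp
  set q : ℝ := ‖Phi + phi‖ with hq
  set w : ℝ := numRadius T with hw
  have hw0 : 0 ≤ w := by
    apply Real.sSup_nonneg
    rintro r ⟨x, hx, rfl⟩
    exact norm_nonneg _
  have hq0 : 0 ≤ q := norm_nonneg _
  have hsp : 0 < Real.sqrt p := Real.sqrt_pos.mpr hre
  -- key pointwise estimate
  have key : ∀ x : H, ‖x‖ = 1 → 2 * Real.sqrt p * ‖T x‖ ≤ q * w := by
    intro x hx
    have h1 := h x hx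
    rw [inner_expand_aux T phi Phi x hx] at h1
    have h2 : ((Phi + phi) * (inner ℂ (T x) x : ℂ)).re
        ≤ q * ‖(inner ℂ (T x) x : ℂ)‖ := by
      calc ((Phi + phi) * (inner ℂ (T x) x : ℂ)).re
          ≤ ‖(Phi + phi) * (inner ℂ (T x) x : ℂ)‖ := Complex.re_le_norm _
        _ = q * ‖(inner ℂ (T x) x : ℂ)‖ := by rw [norm_mul]
    have h3 : ‖(inner ℂ (T x) x : ℂ)‖ ≤ w :=
      le_csSup (numRadius_bdd T) ⟨x, hx, rfl⟩
    have h4 : ‖T x‖^2 + p ≤ q * w := by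
      have := mul_le_mul_of_nonneg_left h3 hq0
      nlinarith
    have hsq : Real.sqrt p ^ 2 = p := Real.sq_sqrt hre.le
    nlinarith [sq_nonneg (‖T x‖ - Real.sqrt p)]
  -- bound the operator norm
  have hC : ‖T‖ ≤ q * w / (2 * Real.sqrt p) := by
    apply T.opNorm_le_bound
    · positivity
    · intro x
      rcases eq_or_ne x 0 with rfl | hx0
      · simp
      · have hxn : ‖x‖ ≠ 0 := norm_ne_zero_iff.mpr hx0
        set y : H := ‖x‖⁻¹ • x with hy
        have hy1 : ‖y‖ = 1 := by
          rw [hy, norm_smul]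
          simp [abs_of_nonneg (inv_nonneg.mpr (norm_nonneg x)), inv_mul_cancel₀ hxn]
        have hk := key y hy1
        have hTy : ‖T y‖ = ‖x‖⁻¹ * ‖T x‖ := by
          rw [hy, T.map_smul_of_tower, norm_smul]
          simp [abs_of_nonneg (inv_nonneg.mpr (norm_nonneg x))]
        rw [hTy] at hk
        rw [div_mul_eq_mul_div, le_div_iff₀ (by positivity)]
        have hxpos : 0 < ‖x‖ := (norm_nonneg x).lt_of_ne' hxn
        calc ‖T x‖ * (2 * Real.sqrt p) = (2 * Real.sqrt p * (‖x‖⁻¹ * ‖T x‖)) * ‖x‖ := by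
              field_simp
          _ ≤ (q * w) * ‖x‖ := by gcongr
  calc 2 * Real.sqrt p * ‖T‖ ≤ 2 * Real.sqrt p * (q * w / (2 * Real.sqrt p)) := by
        gcongr
    _ = q * w := by field_simp
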